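/- arXiv:2202.05776 — 5 statements merged into one kernel-verified Lean document; each statement's English description precedes it below -/
import Mathlib

section
/- Let D be a type equipped with a symmetric neighbor relation ∼, let k ≥ 1, and let A assign to each D ∈ D a probability measure A(D) on ℝ^k. Suppose Δ > 0 is such that for every pair D₁ ∼ D₂ there exists a coupling C of A(D₁) and A(D₂) with ‖z − z′‖₁ ≤ Δ for C-almost every pair (z, z′). Fix ε > 0 and define the Laplace mechanism M(D) to be the distribution of X + (Y₁, …, Y_k), where X has law A(D) and Y₁, …, Y_k are independent of X and i.i.d. with the Laplace distribution Lap(Δ/ε); equivalently M(D) is the convolution of A(D) with the k-fold product of Lap(Δ/ε). Then for every D₁ ∼ D₂ and every measurable set S ⊆ ℝ^k, M(D₁)(S) ≤ exp(ε) · M(D₂)(S). -/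
open MeasureTheory
open scoped ENNReal

/-- The Laplace distribution `Lap(λ)` on `ℝ`, with density
`z ↦ (1/(2λ))·exp(−|z|/λ)` with respect to Lebesgue measure. -/
noncomputable def laplaceMeasure (lam : ℝ) : Measure ℝ :=
  volume.withDensity fun z => ENNReal.ofReal ((1 / (2 * lam)) * Real.exp (-|z| / lam))

instance laplaceMeasure.sigmaFinite (lam : ℝ) : SigmaFinite (laplaceMeasure lam) := by
  unfold laplaceMeasure
  infer_instance

lemma laplace_density_measurable (lam : ℝ) :
    Measurable fun z : ℝ => ENNReal.ofReal ((1 / (2 * lam)) * Real.exp (-|z| / lam)) := by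
  fun_prop

/-- 1-D shift bound for the Laplace measure. -/
lemma laplace_shift_le (b : ℝ) (hb : 0 < b) (a : ℝ) (f : ℝ → ℝ≥0∞) (hf : Measurable f) :
    ∫⁻ z, f (z + a) ∂(laplaceMeasure b) ≤
      ENNReal.ofReal (Real.exp (|a| / b)) * ∫⁻ z, f z ∂(laplaceMeasure b) := by
  set g : ℝ → ℝ≥0∞ := fun z => ENNReal.ofReal ((1 / (2 * b)) * Real.exp (-|z| / b)) with hg
  have hgm : Measurable g := laplace_density_measurable b
  have hfa : Measurable fun z => f (z + a) := hf.comp (measurable_add_const a)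
  have h1 : ∫⁻ z, f (z + a) ∂(laplaceMeasure b) = ∫⁻ z, g z * f (z + a) ∂volume := by
    rw [laplaceMeasure, lintegral_withDensity_eq_lintegral_mul volume hgm hfa]
    rfl
  have h2 : ∫⁻ z, g z * f (z + a) ∂volume = ∫⁻ z, g (z - a) * f z ∂volume := by
    rw [← lintegral_add_right_eq_self (fun z => g (z - a) * f z) a]
    simp
  have h3 : ∀ z, g (z - a) ≤ ENNReal.ofReal (Real.exp (|a| / b)) * g z := by
    intro z
    have habs : |z| - |z - a| ≤ |a| := by
      have h := abs_sub_abs_le_abs_sub z (z - a)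
      simpa using h
    have hexp : (1 / (2 * b)) * Real.exp (-|z - a| / b) ≤
        Real.exp (|a| / b) * ((1 / (2 * b)) * Real.exp (-|z| / b)) := by
      rw [mul_left_comm]
      apply mul_le_mul_of_nonneg_left _ (by positivity)
      rw [← Real.exp_add]
      apply Real.exp_le_exp.mpr
      rw [← add_div]
      gcongr
      linarith
    rw [hg]
    simp only
    rw [← ENNReal.ofReal_mul (Real.exp_nonneg _)]
    exact ENNReal.ofReal_le_ofReal hexp
  calc ∫⁻ z, f (z + a) ∂(laplaceMeasure b)
      = ∫⁻ z, g (z - a) * f z ∂volume := by rw [h1, h2]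
    _ ≤ ∫⁻ z, (ENNReal.ofReal (Real.exp (|a| / b)) * g z) * f z ∂volume :=
        lintegral_mono fun z => mul_le_mul_left (h3 z) _
    _ = ENNReal.ofReal (Real.exp (|a| / b)) * ∫⁻ z, g z * f z ∂volume := by
        simp_rw [mul_assoc]
        exact lintegral_const_mul _ (hgm.mul hf)
    _ = ENNReal.ofReal (Real.exp (|a| / b)) * ∫⁻ z, f z ∂(laplaceMeasure b) := by
        rw [laplaceMeasure, lintegral_withDensity_eq_lintegral_mul volume hgm hf]
        rfl

lemma update_add_eq {k : ℕ} (x u : Fin k → ℝ) (i : Fin k) (t : ℝ) :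
    Function.update x i t + u = Function.update (x + u) i (t + u i) := by
  funext j
  by_cases h : j = i
  · subst h; simp
  · simp [Function.update_of_ne h]

lemma pi_laplace_shift_lmarginal_le (b : ℝ) (hb : 0 < b) {k : ℕ} (u : Fin k → ℝ)
    (F : (Fin k → ℝ) → ℝ≥0∞) (hF : Measurable F) (s : Finset (Fin k)) :
    ∀ x, (∫⋯∫⁻_s, (fun y => F (y + u)) ∂(fun _ => laplaceMeasure b)) x ≤
      (∏ i ∈ s, ENNReal.ofReal (Real.exp (|u i| / b))) *
        (∫⋯∫⁻_s, F ∂(fun _ => laplaceMeasure b)) (x + u) := by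
  classical
  induction s using Finset.induction_on with
  | empty => intro x; simp
  | insert i s hi ih =>
    intro x
    have hFu : Measurable fun y => F (y + u) := hF.comp (measurable_add_const u)
    have hmarg : Measurable (∫⋯∫⁻_s, F ∂(fun _ => laplaceMeasure b)) :=
      Measurable.lmarginal _ hF
    rw [lmarginal_insert _ hFu hi, lmarginal_insert _ hF hi]
    calc ∫⁻ t, (∫⋯∫⁻_s, (fun y => F (y + u)) ∂(fun _ => laplaceMeasure b))
            (Function.update x i t) ∂(laplaceMeasure b)
        ≤ ∫⁻ t, (∏ j ∈ s, ENNReal.ofReal (Real.exp (|u j| / b))) *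
            (∫⋯∫⁻_s, F ∂(fun _ => laplaceMeasure b))
              (Function.update (x + u) i (t + u i)) ∂(laplaceMeasure b) := by
          apply lintegral_mono
          intro t
          have := ih (Function.update x i t)
          rwa [update_add_eq] at this
      _ = (∏ j ∈ s, ENNReal.ofReal (Real.exp (|u j| / b))) *
            ∫⁻ t, (∫⋯∫⁻_s, F ∂(fun _ => laplaceMeasure b))
              (Function.update (x + u) i (t + u i)) ∂(laplaceMeasure b) :=
          lintegral_const_mul _ ((hmarg.comp (measurable_update _)).comp
            (measurable_add_const (u i)))
      _ ≤ (∏ j ∈ s, ENNReal.ofReal (Real.exp (|u j| / b))) *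
            (ENNReal.ofReal (Real.exp (|u i| / b)) *
            ∫⁻ t, (∫⋯∫⁻_s, F ∂(fun _ => laplaceMeasure b))
              (Function.update (x + u) i t) ∂(laplaceMeasure b)) := by
          gcongr
          exact laplace_shift_le b hb (u i) _ (hmarg.comp (measurable_update _))
      _ = (∏ j ∈ insert i s, ENNReal.ofReal (Real.exp (|u j| / b))) *
            ∫⁻ t, (∫⋯∫⁻_s, F ∂(fun _ => laplaceMeasure b))
              (Function.update (x + u) i t) ∂(laplaceMeasure b) := by
          rw [Finset.prod_insert hi]; ring

lemma pi_laplace_shift_le (b : ℝ) (hb : 0 < b) {k : ℕ} (u : Fin k → ℝ)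
    (F : (Fin k → ℝ) → ℝ≥0∞) (hF : Measurable F) :
    ∫⁻ y, F (y + u) ∂(Measure.pi fun _ : Fin k => laplaceMeasure b) ≤
      (∏ i, ENNReal.ofReal (Real.exp (|u i| / b))) *
        ∫⁻ y, F y ∂(Measure.pi fun _ : Fin k => laplaceMeasure b) := by
  rw [lintegral_eq_lmarginal_univ (0 : Fin k → ℝ),
    lintegral_eq_lmarginal_univ ((0 : Fin k → ℝ) + u)]
  exact pi_laplace_shift_lmarginal_le b hb u F hF Finset.univ 0

lemma key_nu_shift {k : ℕ} (b : ℝ) (hb : 0 < b) (Δ : ℝ)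
    (S : Set (Fin k → ℝ)) (hS : MeasurableSet S)
    (t₁ t₂ : Fin k → ℝ) (ht : ∑ i, |t₁ i - t₂ i| ≤ Δ) :
    (Measure.pi fun _ : Fin k => laplaceMeasure b) ((fun y => t₁ + y) ⁻¹' S) ≤
      ENNReal.ofReal (Real.exp (Δ / b)) *
        (Measure.pi fun _ : Fin k => laplaceMeasure b) ((fun y => t₂ + y) ⁻¹' S) := by
  set ν := Measure.pi fun _ : Fin k => laplaceMeasure b with hν
  set u : Fin k → ℝ := t₁ - t₂ with hu
  set F : (Fin k → ℝ) → ℝ≥0∞ := fun y => S.indicator (fun _ => 1) (t₂ + y) with hF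
  have hFm : Measurable F :=
    ((measurable_one.indicator hS).comp (measurable_const_add t₂))
  have hpre : ∀ t : Fin k → ℝ, MeasurableSet ((fun y => t + y) ⁻¹' S) :=
    fun t => (measurable_const_add t) hS
  have e1 : ν ((fun y => t₁ + y) ⁻¹' S) = ∫⁻ y, F (y + u) ∂ν := by
    rw [← lintegral_indicator_one (hpre t₁)]
    refine lintegral_congr fun y => ?_
    have h : t₂ + (y + u) = t₁ + y := by rw [hu]; abel
    show ((fun y => t₁ + y) ⁻¹' S).indicator 1 y = S.indicator (fun _ => 1) (t₂ + (y + u))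
    rw [h]
    by_cases hy : t₁ + y ∈ S <;> simp [Set.indicator_apply, hy]
  have e2 : ν ((fun y => t₂ + y) ⁻¹' S) = ∫⁻ y, F y ∂ν := by
    rw [← lintegral_indicator_one (hpre t₂)]
    refine lintegral_congr fun y => ?_
    show ((fun y => t₂ + y) ⁻¹' S).indicator 1 y = S.indicator (fun _ => 1) (t₂ + y)
    by_cases hy : t₂ + y ∈ S <;> simp [Set.indicator_apply, hy]
  rw [e1, e2]
  refine (pi_laplace_shift_le b hb u F hFm).trans ?_
  gcongr
  have hnn : ∀ i ∈ Finset.univ, 0 ≤ Real.exp (|u i| / b) := fun i _ => Real.exp_nonneg _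
  rw [← ENNReal.ofReal_prod_of_nonneg hnn, ← Real.exp_sum]
  apply ENNReal.ofReal_le_ofReal
  apply Real.exp_le_exp.mpr
  rw [← Finset.sum_div]
  gcongr
  simpa [hu] using ht

/-- If a randomized algorithm `A` has coupled global sensitivity at most `Δ` (witnessed by
almost-sure `ℓ₁`-bounded couplings on neighboring inputs), then the Laplace mechanism obtained
by adding i.i.d. `Lap(Δ/ε)` noise to each of the `k` coordinates of the output of `A`
is `ε`-differentially private. -/
theorem laplace_mechanism_of_coupled_global_sensitivity
    {D : Type*} (nb : D → D → Prop) (hsym : Symmetric nb)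
    (k : ℕ) (hk : 1 ≤ k)
    (A : D → Measure (Fin k → ℝ))
    (hprob : ∀ d, IsProbabilityMeasure (A d))
    (Δ : ℝ) (hΔ : 0 < Δ)
    (hcgs : ∀ D₁ D₂, nb D₁ D₂ →
      ∃ C : Measure ((Fin k → ℝ) × (Fin k → ℝ)),
        IsProbabilityMeasure C ∧
        C.map Prod.fst = A D₁ ∧ C.map Prod.snd = A D₂ ∧
        ∀ᵐ p ∂C, ∑ i, |p.1 i - p.2 i| ≤ Δ)
    (ε : ℝ) (hε : 0 < ε)
    (M : D → Measure (Fin k → ℝ))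
    (hM : ∀ d, M d =
      ((A d).prod (Measure.pi fun _ : Fin k => laplaceMeasure (Δ / ε))).map
        (fun p => p.1 + p.2)) :
    ∀ D₁ D₂, nb D₁ D₂ → ∀ S : Set (Fin k → ℝ), MeasurableSet S →
      M D₁ S ≤ ENNReal.ofReal (Real.exp ε) * M D₂ S := by
  intro D₁ D₂ hnb S hS
  obtain ⟨C, hC, hfst, hsnd, hae⟩ := hcgs D₁ D₂ hnb
  set b := Δ / ε with hbdef
  have hb : 0 < b := div_pos hΔ hε
  set ν := Measure.pi fun _ : Fin k => laplaceMeasure b with hν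
  have haddm : Measurable fun p : (Fin k → ℝ) × (Fin k → ℝ) => p.1 + p.2 :=
    measurable_fst.add measurable_snd
  have hpreS : MeasurableSet ((fun p : (Fin k → ℝ) × (Fin k → ℝ) => p.1 + p.2) ⁻¹' S) :=
    haddm hS
  set φ : (Fin k → ℝ) → ℝ≥0∞ :=
    fun x => ν (Prod.mk x ⁻¹' ((fun p : (Fin k → ℝ) × (Fin k → ℝ) => p.1 + p.2) ⁻¹' S)) with hφ
  have hφm : Measurable φ := measurable_measure_prodMk_left hpreS
  have hMeq : ∀ d, M d S = ∫⁻ x, φ x ∂(A d) := by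
    intro d
    rw [hM d, Measure.map_apply haddm hS, Measure.prod_apply hpreS]
  have hφ_apply : ∀ x, φ x = ν ((fun y => x + y) ⁻¹' S) := fun x => rfl
  have hΔb : Δ / b = ε := by rw [hbdef]; field_simp
  have key : ∀ᵐ p ∂C, φ p.1 ≤ ENNReal.ofReal (Real.exp ε) * φ p.2 := by
    filter_upwards [hae] with p hp
    rw [hφ_apply, hφ_apply, ← hΔb]
    exact key_nu_shift b hb Δ S hS p.1 p.2 hp
  calc M D₁ S = ∫⁻ x, φ x ∂(A D₁) := hMeq D₁
    _ = ∫⁻ p, φ p.1 ∂C := by rw [← hfst, lintegral_map hφm measurable_fst]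
    _ ≤ ∫⁻ p, ENNReal.ofReal (Real.exp ε) * φ p.2 ∂C := lintegral_mono_ae key
    _ = ENNReal.ofReal (Real.exp ε) * ∫⁻ p, φ p.2 ∂C :=
        lintegral_const_mul _ (hφm.comp measurable_snd)
    _ = ENNReal.ofReal (Real.exp ε) * ∫⁻ x, φ x ∂(A D₂) := by
        rw [← hsnd, lintegral_map hφm measurable_snd]
    _ = ENNReal.ofReal (Real.exp ε) * M D₂ S := by rw [hMeq D₂]
end

section
/- Let G₁ be a simple graph on a finite vertex set V, let e* be an unordered pair of distinct vertices of V that is not an edge of G₁, and let G₂ be the graph whose edge set is the edge set of G₁ together with e*. Let π be an injective ranking assigning distinct real values to all unordered pairs of distinct vertices of V, and let M_π(G₁) and M_π(G₂) be the greedy matchings of G₁ and G₂ with respect to π. If e* ∉ M_π(G₂), then M_π(G₁) = M_π(G₂); in particular |M_π(G₁)| = |M_π(G₂)|. -/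
/-- `M` is the greedy matching of the graph `G` with respect to the ranking `π`:
an edge `e` of `G` belongs to `M` iff no edge `e'` of `G` sharing an endpoint with `e`
and of strictly smaller rank belongs to `M`. -/
def IsGreedyMatching {V : Type*} (G : SimpleGraph V) (π : Sym2 V → ℝ)
    (M : Set (Sym2 V)) : Prop :=
  ∀ e : Sym2 V, e ∈ M ↔ e ∈ G.edgeSet ∧
    ∀ e' ∈ G.edgeSet, (∃ v, v ∈ e ∧ v ∈ e') → π e' < π e → e' ∉ M

/-- If `G₂` is obtained from `G₁` by adding a single edge `e* = s(a,b)` and the greedy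
matching of `G₂` (with respect to an injective ranking `π` of the unordered pairs of
distinct vertices) does not contain `e*`, then the greedy matchings of `G₁` and `G₂`
coincide; in particular they have the same size. -/
theorem greedyMatching_eq_of_not_mem {V : Type*} [Fintype V]
    (G₁ G₂ : SimpleGraph V) (a b : V) (hab : a ≠ b)
    (hne : s(a, b) ∉ G₁.edgeSet)
    (hG₂ : G₂.edgeSet = insert s(a, b) G₁.edgeSet)
    (π : Sym2 V → ℝ)
    (hπ : ∀ e₁ e₂ : Sym2 V, ¬e₁.IsDiag → ¬e₂.IsDiag → π e₁ = π e₂ → e₁ = e₂)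
    (M₁ M₂ : Set (Sym2 V))
    (hM₁ : IsGreedyMatching G₁ π M₁) (hM₂ : IsGreedyMatching G₂ π M₂)
    (hstar : s(a, b) ∉ M₂) :
    M₁ = M₂ ∧ M₁.ncard = M₂.ncard := by
  have wf : WellFounded (fun e e' : Sym2 V => π e < π e') := by
    haveI : IsTrans (Sym2 V) (fun e e' => π e < π e') := ⟨fun _ _ _ h h' => h.trans h'⟩
    haveI : IsIrrefl (Sym2 V) (fun e e' => π e < π e') := ⟨fun _ h => lt_irrefl _ h⟩
    exact Finite.wellFounded_of_trans_of_irrefl _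
  have key : ∀ e : Sym2 V, e ∈ M₁ ↔ e ∈ M₂ := by
    intro e
    induction e using wf.induction with
    | _ e IH =>
      by_cases he : e = s(a, b)
      · subst he
        constructor
        · intro h
          exact absurd ((hM₁ _).mp h).1 hne
        · intro h
          exact absurd h hstar
      · rw [hM₁ e, hM₂ e, hG₂]
        have hmem : e ∈ insert s(a, b) G₁.edgeSet ↔ e ∈ G₁.edgeSet := by
          simp [he]
        rw [hmem]
        constructor
        · rintro ⟨hG, h⟩
          refine ⟨hG, fun e' he' hadj hlt => ?_⟩
          rcases he' with rfl | he'
          · exact hstar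
          · exact fun hmem' => h e' he' hadj hlt ((IH e' hlt).mpr hmem')
        · rintro ⟨hG, h⟩
          refine ⟨hG, fun e' he' hadj hlt => ?_⟩
          exact fun hmem' =>
            h e' (Set.mem_insert_of_mem _ he') hadj hlt ((IH e' hlt).mp hmem')
  have heq : M₁ = M₂ := Set.ext key
  exact ⟨heq, by rw [heq]⟩
end

section
/- Let G₁ be a simple graph on a finite vertex set V, let e* be an unordered pair of distinct vertices of V that is not an edge of G₁, and let G₂ be the graph whose edge set is the edge set of G₁ together with e*. Let π be an injective ranking assigning distinct real values to all unordered pairs of distinct vertices of V, and let M₁ = M_π(G₁) and M₂ = M_π(G₂) be the corresponding greedy matchings. If e* ∈ M₂, then e* belongs to the symmetric difference M₁ ⊕ M₂, and in the graph H on vertex set V whose edge set is M₁ ⊕ M₂, every edge of H lies in the connected component of H containing the endpoints of e*; that is, H has exactly one connected component containing edges. -/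
/-- If `G₂` is obtained from `G₁` by adding a single edge `e* = s(a,b)` and the greedy
matching `M₂` of `G₂` contains `e*`, then `e*` lies in the symmetric difference `M₁ ∆ M₂`
of the two greedy matchings, and in the graph `H` on `V` whose edge set is `M₁ ∆ M₂`,
every endpoint of every edge is connected to the endpoint `a` of `e*`; i.e. all edges of
`H` lie in the single connected component of `H` containing the endpoints of `e*`. -/
theorem greedyMatching_symmDiff_single_component {V : Type*} [Fintype V]
    (G₁ G₂ : SimpleGraph V) (a b : V) (hab : a ≠ b)
    (hne : s(a, b) ∉ G₁.edgeSet)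
    (hG₂ : G₂.edgeSet = insert s(a, b) G₁.edgeSet)
    (π : Sym2 V → ℝ)
    (hπ : ∀ e₁ e₂ : Sym2 V, ¬e₁.IsDiag → ¬e₂.IsDiag → π e₁ = π e₂ → e₁ = e₂)
    (M₁ M₂ : Set (Sym2 V))
    (hM₁ : IsGreedyMatching G₁ π M₁) (hM₂ : IsGreedyMatching G₂ π M₂)
    (hstar : s(a, b) ∈ M₂) :
    s(a, b) ∈ symmDiff M₁ M₂ ∧
      ∀ e ∈ symmDiff M₁ M₂, ∀ v ∈ e,
        (SimpleGraph.fromEdgeSet (symmDiff M₁ M₂)).Reachable v a := by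
  classical
  set D : Set (Sym2 V) := symmDiff M₁ M₂ with hD
  have hM₁sub : M₁ ⊆ G₁.edgeSet := fun e he => ((hM₁ e).1 he).1
  have hM₂sub : M₂ ⊆ G₂.edgeSet := fun e he => ((hM₂ e).1 he).1
  have hstar₁ : s(a, b) ∉ M₁ := fun h => hne (hM₁sub h)
  have hDab : s(a, b) ∈ D := by
    rw [hD, Set.mem_symmDiff]; right; exact ⟨hstar, hstar₁⟩
  have key : ∀ e ∈ D, e ≠ s(a, b) →
      ∃ e' ∈ D, (∃ v, v ∈ e ∧ v ∈ e') ∧ π e' < π e := by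
    intro e heD hene
    rw [hD, Set.mem_symmDiff] at heD
    rcases heD with ⟨he₁, he₂⟩ | ⟨he₂, he₁⟩
    · -- e ∈ M₁ \ M₂
      have heG₁ : e ∈ G₁.edgeSet := hM₁sub he₁
      have heG₂ : e ∈ G₂.edgeSet := by rw [hG₂]; exact Set.mem_insert_of_mem _ heG₁
      have : ¬(e ∈ G₂.edgeSet ∧ ∀ e' ∈ G₂.edgeSet,
          (∃ v, v ∈ e ∧ v ∈ e') → π e' < π e → e' ∉ M₂) := fun h => he₂ ((hM₂ e).2 h)
      push_neg at this
      obtain ⟨e', he'G₂, hshare, hlt, he'M₂⟩ := this heG₂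
      refine ⟨e', ?_, hshare, hlt⟩
      rw [hD, Set.mem_symmDiff]
      right
      refine ⟨he'M₂, ?_⟩
      intro he'M₁
      have he'G₁ : e' ∈ G₁.edgeSet := hM₁sub he'M₁
      exact ((hM₁ e).1 he₁).2 e' he'G₁ hshare hlt he'M₁
    · -- e ∈ M₂ \ M₁
      have heG₂ : e ∈ G₂.edgeSet := hM₂sub he₂
      have heG₁ : e ∈ G₁.edgeSet := by
        rw [hG₂] at heG₂
        rcases heG₂ with h | h
        · exact absurd h hene
        · exact h
      have : ¬(e ∈ G₁.edgeSet ∧ ∀ e' ∈ G₁.edgeSet,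
          (∃ v, v ∈ e ∧ v ∈ e') → π e' < π e → e' ∉ M₁) := fun h => he₁ ((hM₁ e).2 h)
      push_neg at this
      obtain ⟨e', he'G₁, hshare, hlt, he'M₁⟩ := this heG₁
      refine ⟨e', ?_, hshare, hlt⟩
      rw [hD, Set.mem_symmDiff]
      left
      refine ⟨he'M₁, ?_⟩
      intro he'M₂
      exact ((hM₂ e).1 he₂).2 e'
        (by rw [hG₂]; exact Set.mem_insert_of_mem _ he'G₁) hshare hlt he'M₂
  -- measure
  have hfin : ∀ e : Sym2 V, ({x ∈ D | π x < π e} : Set (Sym2 V)).Finite :=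
    fun e => Set.toFinite _
  set f : Sym2 V → ℕ := fun e => ({x ∈ D | π x < π e} : Set (Sym2 V)).ncard with hf
  have hfmono : ∀ e e' : Sym2 V, e' ∈ D → π e' < π e → f e' < f e := by
    intro e e' he'D hlt
    apply Set.ncard_lt_ncard _ (hfin e)
    constructor
    · intro x hx
      exact ⟨hx.1, hx.2.trans hlt⟩
    · intro hsub
      have := hsub ⟨he'D, hlt⟩
      exact lt_irrefl _ this.2
  have main : ∀ n : ℕ, ∀ e ∈ D, f e ≤ n → ∀ v ∈ e,
      (SimpleGraph.fromEdgeSet D).Reachable v a := by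
    intro n
    induction n with
    | zero =>
      intro e heD hfe v hv
      by_cases hene : e = s(a, b)
      · subst hene
        rw [Sym2.mem_iff] at hv
        rcases hv with rfl | rfl
        · exact SimpleGraph.Reachable.refl _
        · exact SimpleGraph.Adj.reachable (by
            rw [SimpleGraph.fromEdgeSet_adj]
            exact ⟨by rwa [Sym2.eq_swap], hab.symm⟩)
      · obtain ⟨e', he'D, _, hlt⟩ := key e heD hene
        exact absurd (lt_of_lt_of_le (hfmono e e' he'D hlt) hfe) (by omega)
    | succ n ih =>
      intro e heD hfe v hv
      by_cases hene : e = s(a, b)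
      · subst hene
        rw [Sym2.mem_iff] at hv
        rcases hv with rfl | rfl
        · exact SimpleGraph.Reachable.refl _
        · exact SimpleGraph.Adj.reachable (by
            rw [SimpleGraph.fromEdgeSet_adj]
            exact ⟨by rwa [Sym2.eq_swap], hab.symm⟩)
      · obtain ⟨e', he'D, ⟨w, hwe, hwe'⟩, hlt⟩ := key e heD hene
        have hfe' : f e' ≤ n := by
          have := hfmono e e' he'D hlt
          omega
        have hwa : (SimpleGraph.fromEdgeSet D).Reachable w a :=
          ih e' he'D hfe' w hwe'
        by_cases hvw : v = w
        · rwa [hvw]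
        · have hevw : e = s(v, w) := ((Sym2.mem_and_mem_iff hvw).mp ⟨hv, hwe⟩)
          refine SimpleGraph.Reachable.trans (SimpleGraph.Adj.reachable ?_) hwa
          rw [SimpleGraph.fromEdgeSet_adj]
          exact ⟨by rwa [← hevw], hvw⟩
  exact ⟨hDab, fun e heD v hv => main (f e) e heD le_rfl v hv⟩
end

section
/- Let G₁ be a simple graph on a finite vertex set V, let e* be an unordered pair of distinct vertices of V that is not an edge of G₁, and let G₂ be the graph whose edge set is the edge set of G₁ together with e*. Then for every injective ranking π assigning distinct real values to all unordered pairs of distinct vertices of V, the greedy matchings satisfy | |M_π(G₁)| − |M_π(G₂)| | ≤ 1. -/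
set_option maxHeartbeats 1000000

namespace GreedySensitivity


variable {V : Type*}

def VS (S : Set (Sym2 V)) : Set V := {x | ∃ e ∈ S, x ∈ e}

lemma VS_insert (x y : V) (S : Set (Sym2 V)) :
    VS (insert s(x,y) S) = insert x (insert y (VS S)) := by
  ext z
  simp only [VS, Set.mem_setOf_eq, Set.mem_insert_iff]
  constructor
  · rintro ⟨e, (rfl | he), hz⟩
    · rcases Sym2.mem_iff.1 hz with rfl | rfl
      · exact Or.inl rfl
      · exact Or.inr (Or.inl rfl)
    · exact Or.inr (Or.inr ⟨e, he, hz⟩)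
  · rintro (rfl | rfl | ⟨e, he, hz⟩)
    · exact ⟨s(z,y), Or.inl rfl, by simp⟩
    · exact ⟨s(x,z), Or.inl rfl, by simp⟩
    · exact ⟨e, Or.inr he, hz⟩

lemma nmi {z p : V} {T : Set V} (h1 : z ≠ p) (h2 : z ∉ T) : z ∉ insert p T := by
  simp only [Set.mem_insert_iff, not_or]; exact ⟨h1, h2⟩

lemma cyc3 (p q r : V) (T : Set V) :
    insert p (insert q (insert r T)) = insert r (insert p (insert q T)) := by
  rw [Set.insert_comm q r, Set.insert_comm p r]

lemma rot3 (p q r : V) (T : Set V) :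
    insert p (insert q (insert r T)) = insert r (insert q (insert p T)) := by
  rw [Set.insert_comm q r, Set.insert_comm p r, Set.insert_comm p q]

lemma swap4 (p q r s : V) (T : Set V) :
    insert p (insert q (insert r (insert s T))) =
      insert r (insert s (insert p (insert q T))) := by
  ext z; simp only [Set.mem_insert_iff]; tauto

def Inv (estar : Sym2 V) (A B : Set (Sym2 V)) : Prop :=
  (VS A = VS B ∧ A.ncard = B.ncard) ∨
  (estar ∈ B ∧
    ((∃ u v, u ≠ v ∧ u ∉ VS A ∧ v ∉ VS A ∧ VS B = insert u (insert v (VS A)) ∧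
        B.ncard = A.ncard + 1) ∨
     (∃ u v, u ≠ v ∧ u ∉ VS B ∧ v ∉ VS B ∧ VS A = insert u (insert v (VS B)) ∧
        A.ncard = B.ncard + 1) ∨
     (∃ C u v, u ≠ v ∧ u ∉ C ∧ v ∉ C ∧ VS A = insert u C ∧ VS B = insert v C ∧
        A.ncard = B.ncard)))

lemma Inv.step {a b x y : V} (hxy : x ≠ y)
    {A B A' B' : Set (Sym2 V)} (hA : A.Finite) (hB : B.Finite)
    (heA : s(x,y) ∉ A) (heB : s(x,y) ∉ B)
    (hInv : Inv s(a,b) A B)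
    (hA'i : s(x,y) ≠ s(a,b) → x ∉ VS A → y ∉ VS A → A' = insert s(x,y) A)
    (hA'n : s(x,y) = s(a,b) ∨ x ∈ VS A ∨ y ∈ VS A → A' = A)
    (hB'i : x ∉ VS B → y ∉ VS B → B' = insert s(x,y) B)
    (hB'n : x ∈ VS B ∨ y ∈ VS B → B' = B) :
    Inv s(a,b) A' B' := by
  rcases hInv with ⟨hV, hc⟩ | ⟨hstar, hrest⟩
  · -- State 1 : equal vertex sets and cardinalities
    by_cases hxB : x ∈ VS B
    · rw [hB'n (Or.inl hxB), hA'n (Or.inr (Or.inl (by rw [hV]; exact hxB)))]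
      exact Or.inl ⟨hV, hc⟩
    · by_cases hyB : y ∈ VS B
      · rw [hB'n (Or.inr hyB), hA'n (Or.inr (Or.inr (by rw [hV]; exact hyB)))]
        exact Or.inl ⟨hV, hc⟩
      · have hxA : x ∉ VS A := by rw [hV]; exact hxB
        have hyA : y ∉ VS A := by rw [hV]; exact hyB
        rw [hB'i hxB hyB]
        by_cases he : s(x,y) = s(a,b)
        · rw [hA'n (Or.inl he)]
          refine Or.inr ⟨he ▸ Set.mem_insert _ _,
            Or.inl ⟨x, y, hxy, hxA, hyA, ?_, ?_⟩⟩
          · rw [VS_insert, hV]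
          · rw [Set.ncard_insert_of_notMem heB hB, hc]
        · rw [hA'i he hxA hyA]
          refine Or.inl ⟨by rw [VS_insert, VS_insert, hV], ?_⟩
          rw [Set.ncard_insert_of_notMem heA hA, Set.ncard_insert_of_notMem heB hB, hc]
  · have hexy : s(x,y) ≠ s(a,b) := fun h => heB (h ▸ hstar)
    rcases hrest with ⟨u, v, huv, huA, hvA, hVB, hc⟩ | ⟨u, v, huv, huB, hvB, hVA, hc⟩ |
      ⟨C, u, v, huv, huC, hvC, hVA, hVB, hc⟩
    · -- State 2 : B is one ahead, VS B = VS A ∪ {u,v}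
      have hAB : ∀ z, z ∈ VS A → z ∈ VS B := fun z hz => by
        rw [hVB]; exact Set.mem_insert_of_mem _ (Set.mem_insert_of_mem _ hz)
      have huB : u ∈ VS B := by rw [hVB]; exact Set.mem_insert _ _
      have hvB : v ∈ VS B := by rw [hVB]; exact Set.mem_insert_of_mem _ (Set.mem_insert _ _)
      by_cases hxB : x ∈ VS B <;> by_cases hyB : y ∈ VS B
      · -- both endpoints covered in B : B unchanged
        rw [hB'n (Or.inl hxB)]
        by_cases hC1 : x ∈ VS A ∨ y ∈ VS A
        · rw [hA'n (Or.inr hC1)]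
          exact Or.inr ⟨hstar, Or.inl ⟨u, v, huv, huA, hvA, hVB, hc⟩⟩
        · push_neg at hC1
          obtain ⟨hxA, hyA⟩ := hC1
          rw [hA'i hexy hxA hyA]
          have hxuv : x = u ∨ x = v := by
            rw [hVB] at hxB
            rcases hxB with h | h | h
            · exact Or.inl h
            · exact Or.inr h
            · exact absurd h hxA
          have hyuv : y = u ∨ y = v := by
            rw [hVB] at hyB
            rcases hyB with h | h | h
            · exact Or.inl h
            · exact Or.inr h
            · exact absurd h hyA
          refine Or.inl ⟨?_, ?_⟩
          · rw [VS_insert, hVB]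
            rcases hxuv with rfl | rfl
            · rcases hyuv with rfl | rfl
              · exact absurd rfl hxy
              · rfl
            · rcases hyuv with rfl | rfl
              · exact Set.insert_comm _ _ _
              · exact absurd rfl hxy
          · rw [Set.ncard_insert_of_notMem heA hA, hc]
      · -- x covered in B, y not
        rw [hB'n (Or.inl hxB)]
        have hyA : y ∉ VS A := fun h => hyB (hAB y h)
        by_cases hxA : x ∈ VS A
        · rw [hA'n (Or.inr (Or.inl hxA))]
          exact Or.inr ⟨hstar, Or.inl ⟨u, v, huv, huA, hvA, hVB, hc⟩⟩
        · rw [hA'i hexy hxA hyA]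
          have hxuv : x = u ∨ x = v := by
            rw [hVB] at hxB
            rcases hxB with h | h | h
            · exact Or.inl h
            · exact Or.inr h
            · exact absurd h hxA
          have hcard : (insert s(x,y) A).ncard = B.ncard := by
            rw [Set.ncard_insert_of_notMem heA hA, hc]
          rcases hxuv with rfl | rfl
          · refine Or.inr ⟨hstar, Or.inr (Or.inr
              ⟨insert x (VS A), y, v, fun h => hyB (h ▸ hvB), nmi hxy.symm hyA,
               nmi (fun h => huv h.symm) hvA, ?_, ?_, hcard⟩)⟩
            · rw [VS_insert]; exact Set.insert_comm _ _ _
            · rw [hVB]; exact Set.insert_comm _ _ _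
          · refine Or.inr ⟨hstar, Or.inr (Or.inr
              ⟨insert x (VS A), y, u, fun h => hyB (h ▸ huB), nmi hxy.symm hyA,
               nmi huv huA, ?_, ?_, hcard⟩)⟩
            · rw [VS_insert]; exact Set.insert_comm _ _ _
            · rw [hVB]
      · -- y covered in B, x not
        rw [hB'n (Or.inr hyB)]
        have hxA : x ∉ VS A := fun h => hxB (hAB x h)
        by_cases hyA : y ∈ VS A
        · rw [hA'n (Or.inr (Or.inr hyA))]
          exact Or.inr ⟨hstar, Or.inl ⟨u, v, huv, huA, hvA, hVB, hc⟩⟩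
        · rw [hA'i hexy hxA hyA]
          have hyuv : y = u ∨ y = v := by
            rw [hVB] at hyB
            rcases hyB with h | h | h
            · exact Or.inl h
            · exact Or.inr h
            · exact absurd h hyA
          have hcard : (insert s(x,y) A).ncard = B.ncard := by
            rw [Set.ncard_insert_of_notMem heA hA, hc]
          rcases hyuv with rfl | rfl
          · refine Or.inr ⟨hstar, Or.inr (Or.inr
              ⟨insert y (VS A), x, v, fun h => hxB (h ▸ hvB), nmi hxy hxA,
               nmi (fun h => huv h.symm) hvA, ?_, ?_, hcard⟩)⟩
            · rw [VS_insert]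
            · rw [hVB]; exact Set.insert_comm _ _ _
          · refine Or.inr ⟨hstar, Or.inr (Or.inr
              ⟨insert y (VS A), x, u, fun h => hxB (h ▸ huB), nmi hxy hxA,
               nmi huv huA, ?_, ?_, hcard⟩)⟩
            · rw [VS_insert]
            · rw [hVB]
      · -- neither endpoint covered in B : both insert
        have hxA : x ∉ VS A := fun h => hxB (hAB x h)
        have hyA : y ∉ VS A := fun h => hyB (hAB y h)
        rw [hB'i hxB hyB, hA'i hexy hxA hyA]
        refine Or.inr ⟨Set.mem_insert_of_mem _ hstar, Or.inl
          ⟨u, v, huv, ?_, ?_, ?_, ?_⟩⟩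
        · rw [VS_insert]
          exact nmi (fun h => hxB (h ▸ huB)) (nmi (fun h => hyB (h ▸ huB)) huA)
        · rw [VS_insert]
          exact nmi (fun h => hxB (h ▸ hvB)) (nmi (fun h => hyB (h ▸ hvB)) hvA)
        · rw [VS_insert, VS_insert, hVB]
          exact swap4 _ _ _ _ _
        · rw [Set.ncard_insert_of_notMem heA hA, Set.ncard_insert_of_notMem heB hB, hc]
    · -- State 2' : A is one ahead, VS A = VS B ∪ {u,v}
      have hBA : ∀ z, z ∈ VS B → z ∈ VS A := fun z hz => by
        rw [hVA]; exact Set.mem_insert_of_mem _ (Set.mem_insert_of_mem _ hz)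
      have huA : u ∈ VS A := by rw [hVA]; exact Set.mem_insert _ _
      have hvA : v ∈ VS A := by rw [hVA]; exact Set.mem_insert_of_mem _ (Set.mem_insert _ _)
      by_cases hC2 : x ∈ VS B ∨ y ∈ VS B
      · -- B unchanged, A unchanged (some endpoint covered in B ⊆ A)
        rw [hB'n hC2]
        have : x ∈ VS A ∨ y ∈ VS A := by
          rcases hC2 with h | h
          · exact Or.inl (hBA x h)
          · exact Or.inr (hBA y h)
        rw [hA'n (Or.inr this)]
        exact Or.inr ⟨hstar, Or.inr (Or.inl ⟨u, v, huv, huB, hvB, hVA, hc⟩)⟩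
      · push_neg at hC2
        obtain ⟨hxB, hyB⟩ := hC2
        rw [hB'i hxB hyB]
        by_cases hxA : x ∈ VS A <;> by_cases hyA : y ∈ VS A
        · -- both endpoints in VS A \ VS B = {u,v} : B catches up, state 1
          rw [hA'n (Or.inr (Or.inl hxA))]
          have hxuv : x = u ∨ x = v := by
            rw [hVA] at hxA
            rcases hxA with h | h | h
            · exact Or.inl h
            · exact Or.inr h
            · exact absurd h hxB
          have hyuv : y = u ∨ y = v := by
            rw [hVA] at hyA
            rcases hyA with h | h | h
            · exact Or.inl h
            · exact Or.inr h
            · exact absurd h hyB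
          refine Or.inl ⟨?_, ?_⟩
          · rw [VS_insert, hVA]
            rcases hxuv with rfl | rfl
            · rcases hyuv with rfl | rfl
              · exact absurd rfl hxy
              · rfl
            · rcases hyuv with rfl | rfl
              · exact Set.insert_comm _ _ _
              · exact absurd rfl hxy
          · rw [Set.ncard_insert_of_notMem heB hB, hc]
        · -- x ∈ VS A (so x ∈ {u,v}), y fresh
          rw [hA'n (Or.inr (Or.inl hxA))]
          have hxuv : x = u ∨ x = v := by
            rw [hVA] at hxA
            rcases hxA with h | h | h
            · exact Or.inl h
            · exact Or.inr h
            · exact absurd h hxB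
          have hcard : A.ncard = (insert s(x,y) B).ncard := by
            rw [Set.ncard_insert_of_notMem heB hB, hc]
          rcases hxuv with rfl | rfl
          · refine Or.inr ⟨Set.mem_insert_of_mem _ hstar, Or.inr (Or.inr
              ⟨insert x (VS B), v, y, fun h => hyA (h ▸ hvA),
               nmi (fun h => huv h.symm) hvB, nmi hxy.symm hyB, ?_, ?_, hcard⟩)⟩
            · rw [hVA]; exact Set.insert_comm _ _ _
            · rw [VS_insert]; exact Set.insert_comm _ _ _
          · refine Or.inr ⟨Set.mem_insert_of_mem _ hstar, Or.inr (Or.inr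
              ⟨insert x (VS B), u, y, fun h => hyA (h ▸ huA),
               nmi huv huB, nmi hxy.symm hyB, ?_, ?_, hcard⟩)⟩
            · rw [hVA]
            · rw [VS_insert]; exact Set.insert_comm _ _ _
        · -- y ∈ VS A (so y ∈ {u,v}), x fresh
          rw [hA'n (Or.inr (Or.inr hyA))]
          have hyuv : y = u ∨ y = v := by
            rw [hVA] at hyA
            rcases hyA with h | h | h
            · exact Or.inl h
            · exact Or.inr h
            · exact absurd h hyB
          have hcard : A.ncard = (insert s(x,y) B).ncard := by
            rw [Set.ncard_insert_of_notMem heB hB, hc]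
          rcases hyuv with rfl | rfl
          · refine Or.inr ⟨Set.mem_insert_of_mem _ hstar, Or.inr (Or.inr
              ⟨insert y (VS B), v, x, fun h => hxA (h ▸ hvA),
               nmi (fun h => huv h.symm) hvB, nmi hxy hxB, ?_, ?_, hcard⟩)⟩
            · rw [hVA]; exact Set.insert_comm _ _ _
            · rw [VS_insert]
          · refine Or.inr ⟨Set.mem_insert_of_mem _ hstar, Or.inr (Or.inr
              ⟨insert y (VS B), u, x, fun h => hxA (h ▸ huA),
               nmi huv huB, nmi hxy hxB, ?_, ?_, hcard⟩)⟩
            · rw [hVA]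
            · rw [VS_insert]
        · -- both fresh : both insert, state 2' persists
          rw [hA'i hexy hxA hyA]
          refine Or.inr ⟨Set.mem_insert_of_mem _ hstar, Or.inr (Or.inl
            ⟨u, v, huv, ?_, ?_, ?_, ?_⟩)⟩
          · rw [VS_insert]
            exact nmi (fun h => hxA (h ▸ huA)) (nmi (fun h => hyA (h ▸ huA)) huB)
          · rw [VS_insert]
            exact nmi (fun h => hxA (h ▸ hvA)) (nmi (fun h => hyA (h ▸ hvA)) hvB)
          · rw [VS_insert, VS_insert, hVA]
            exact swap4 _ _ _ _ _
          · rw [Set.ncard_insert_of_notMem heA hA, Set.ncard_insert_of_notMem heB hB, hc]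
    · -- State 3 : VS A = C ∪ {u}, VS B = C ∪ {v}
      have huA : u ∈ VS A := by rw [hVA]; exact Set.mem_insert _ _
      have hvB : v ∈ VS B := by rw [hVB]; exact Set.mem_insert _ _
      have hCA : ∀ z, z ∈ C → z ∈ VS A := fun z hz => by
        rw [hVA]; exact Set.mem_insert_of_mem _ hz
      have hCB : ∀ z, z ∈ C → z ∈ VS B := fun z hz => by
        rw [hVB]; exact Set.mem_insert_of_mem _ hz
      by_cases hC1 : x ∈ VS A ∨ y ∈ VS A <;> by_cases hC2 : x ∈ VS B ∨ y ∈ VS B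
      · -- both sides skip
        rw [hA'n (Or.inr hC1), hB'n hC2]
        exact Or.inr ⟨hstar, Or.inr (Or.inr ⟨C, u, v, huv, huC, hvC, hVA, hVB, hc⟩)⟩
      · -- A skips, B inserts; the covered endpoint must be u
        push_neg at hC2
        obtain ⟨hxB, hyB⟩ := hC2
        rw [hA'n (Or.inr hC1), hB'i hxB hyB]
        have hcard : (insert s(x,y) B).ncard = A.ncard + 1 := by
          rw [Set.ncard_insert_of_notMem heB hB, hc]
        rcases hC1 with hxA | hyA
        · have hxu : x = u := by
            rw [hVA] at hxA
            rcases hxA with h | h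
            · exact h
            · exact absurd (hCB x h) hxB
          subst hxu
          have hyA : y ∉ VS A := by
            rw [hVA]
            exact nmi hxy.symm (fun h => hyB (hCB y h))
          refine Or.inr ⟨Set.mem_insert_of_mem _ hstar, Or.inl
            ⟨v, y, fun h => hyB (h ▸ hvB), ?_, hyA, ?_, hcard⟩⟩
          · rw [hVA]; exact nmi (fun h => huv h.symm) hvC
          · rw [VS_insert, hVB, hVA]
            exact rot3 _ _ _ _
        · have hyu : y = u := by
            rw [hVA] at hyA
            rcases hyA with h | h
            · exact h
            · exact absurd (hCB y h) hyB
          subst hyu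
          have hxA : x ∉ VS A := by
            rw [hVA]
            exact nmi hxy (fun h => hxB (hCB x h))
          refine Or.inr ⟨Set.mem_insert_of_mem _ hstar, Or.inl
            ⟨v, x, fun h => hxB (h ▸ hvB), ?_, hxA, ?_, hcard⟩⟩
          · rw [hVA]; exact nmi (fun h => huv h.symm) hvC
          · rw [VS_insert, hVB, hVA]
            exact cyc3 _ _ _ _
      · -- B skips, A inserts; the covered endpoint must be v
        push_neg at hC1
        obtain ⟨hxA, hyA⟩ := hC1
        rw [hB'n hC2, hA'i hexy hxA hyA]
        have hcard : (insert s(x,y) A).ncard = B.ncard + 1 := by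
          rw [Set.ncard_insert_of_notMem heA hA, hc]
        rcases hC2 with hxB | hyB
        · have hxv : x = v := by
            rw [hVB] at hxB
            rcases hxB with h | h
            · exact h
            · exact absurd (hCA x h) hxA
          subst hxv
          have hyB : y ∉ VS B := by
            rw [hVB]
            exact nmi hxy.symm (fun h => hyA (hCA y h))
          refine Or.inr ⟨hstar, Or.inr (Or.inl
            ⟨u, y, fun h => hyA (h ▸ huA), ?_, hyB, ?_, hcard⟩)⟩
          · rw [hVB]; exact nmi huv huC
          · rw [VS_insert, hVA, hVB]
            exact rot3 _ _ _ _
        · have hyv : y = v := by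
            rw [hVB] at hyB
            rcases hyB with h | h
            · exact h
            · exact absurd (hCA y h) hyA
          subst hyv
          have hxB : x ∉ VS B := by
            rw [hVB]
            exact nmi hxy (fun h => hxA (hCA x h))
          refine Or.inr ⟨hstar, Or.inr (Or.inl
            ⟨u, x, fun h => hxA (h ▸ huA), ?_, hxB, ?_, hcard⟩)⟩
          · rw [hVB]; exact nmi huv huC
          · rw [VS_insert, hVA, hVB]
            exact cyc3 _ _ _ _
      · -- both insert
        push_neg at hC1
        push_neg at hC2
        obtain ⟨hxA, hyA⟩ := hC1
        obtain ⟨hxB, hyB⟩ := hC2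
        rw [hA'i hexy hxA hyA, hB'i hxB hyB]
        refine Or.inr ⟨Set.mem_insert_of_mem _ hstar, Or.inr (Or.inr
          ⟨insert x (insert y C), u, v, huv, ?_, ?_, ?_, ?_, ?_⟩)⟩
        · exact nmi (fun h => hxA (h ▸ huA)) (nmi (fun h => hyA (h ▸ huA)) huC)
        · exact nmi (fun h => hxB (h ▸ hvB)) (nmi (fun h => hyB (h ▸ hvB)) hvC)
        · rw [VS_insert, hVA]
          exact cyc3 _ _ _ _
        · rw [VS_insert, hVB]
          exact cyc3 _ _ _ _
        · rw [Set.ncard_insert_of_notMem heA hA, Set.ncard_insert_of_notMem heB hB, hc]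


lemma mem_VS {S : Set (Sym2 V)} {e : Sym2 V} {z : V} (he : e ∈ S) (hz : z ∈ e) :
    z ∈ VS S := ⟨e, he, hz⟩

lemma Inv.card_diff {estar : Sym2 V} {A B : Set (Sym2 V)} (h : Inv estar A B) :
    |(A.ncard : ℤ) - (B.ncard : ℤ)| ≤ 1 := by
  rcases h with ⟨-, hc⟩ | ⟨-, ⟨u, v, -, -, -, -, hc⟩ | ⟨u, v, -, -, -, -, hc⟩ |
    ⟨C, u, v, -, -, -, -, -, hc⟩⟩ <;> (rw [abs_le]; omega)

lemma greedy_char (G : SimpleGraph V) (π : Sym2 V → ℝ) (M : Set (Sym2 V))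
    (hM : IsGreedyMatching G π M) (S' : Finset (Sym2 V)) (e : Sym2 V)
    (hup : ∀ e' ∈ G.edgeSet, π e' < π e → e' ∈ S')
    (hdown : ∀ e' ∈ S', π e' < π e) :
    e ∈ M ↔ e ∈ G.edgeSet ∧ ∀ z ∈ e, z ∉ VS (M ∩ ↑S') := by
  constructor
  · intro he
    obtain ⟨heg, hblock⟩ := (hM e).1 he
    refine ⟨heg, ?_⟩
    rintro z hz ⟨e', ⟨he'M, he'S⟩, hz'⟩
    have he'g : e' ∈ G.edgeSet := ((hM e').1 he'M).1
    exact hblock e' he'g ⟨z, hz, hz'⟩ (hdown e' he'S) he'M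
  · rintro ⟨heg, hfree⟩
    refine (hM e).2 ⟨heg, ?_⟩
    rintro e' he'g ⟨z, hz, hz'⟩ hlt he'M
    exact hfree z hz ⟨e', ⟨he'M, hup e' he'g hlt⟩, hz'⟩


lemma inter_insert_mem {M T : Set (Sym2 V)} {e : Sym2 V} (hm : e ∈ M) :
    M ∩ insert e T = insert e (M ∩ T) := by
  ext z
  simp only [Set.mem_inter_iff, Set.mem_insert_iff]
  constructor
  · rintro ⟨h1, rfl | h2⟩
    · exact Or.inl rfl
    · exact Or.inr ⟨h1, h2⟩
  · rintro (rfl | ⟨h1, h2⟩)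
    · exact ⟨hm, Or.inl rfl⟩
    · exact ⟨h1, Or.inr h2⟩

lemma inter_insert_notMem {M T : Set (Sym2 V)} {e : Sym2 V} (hm : e ∉ M) :
    M ∩ insert e T = M ∩ T := by
  ext z
  simp only [Set.mem_inter_iff, Set.mem_insert_iff]
  constructor
  · rintro ⟨h1, rfl | h2⟩
    · exact absurd h1 hm
    · exact ⟨h1, h2⟩
  · rintro ⟨h1, h2⟩
    exact ⟨h1, Or.inr h2⟩

lemma main {W : Type*} [Fintype W]
    (G₁ G₂ : SimpleGraph W) (a b : W)
    (hne : s(a, b) ∉ G₁.edgeSet)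
    (hG₂ : G₂.edgeSet = insert s(a, b) G₁.edgeSet)
    (π : Sym2 W → ℝ)
    (hπ : ∀ e₁ e₂ : Sym2 W, ¬e₁.IsDiag → ¬e₂.IsDiag → π e₁ = π e₂ → e₁ = e₂)
    (M₁ M₂ : Set (Sym2 W))
    (hM₁ : IsGreedyMatching G₁ π M₁) (hM₂ : IsGreedyMatching G₂ π M₂) :
    ∀ (n : ℕ) (S : Finset (Sym2 W)), S.card = n → ↑S ⊆ G₂.edgeSet →
      (∀ e ∈ S, ∀ e' ∈ G₂.edgeSet, π e' < π e → e' ∈ S) →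
      Inv s(a,b) (M₁ ∩ ↑S) (M₂ ∩ ↑S) := by
  classical
  intro n
  induction n with
  | zero =>
    intro S hcard _ _
    rw [Finset.card_eq_zero.1 hcard]
    simp only [Finset.coe_empty, Set.inter_empty]
    exact Or.inl ⟨rfl, rfl⟩
  | succ n ih =>
    intro S hcard hsub hclosed
    have hSne : S.Nonempty := Finset.card_pos.1 (by omega)
    obtain ⟨e, heS, hmax⟩ := S.exists_max_image π hSne
    revert heS hmax
    induction e using Sym2.ind with
    | _ x y =>
    intro heS hmax
    set S' := S.erase s(x,y) with hS'def
    have heS2 : s(x,y) ∈ G₂.edgeSet := hsub heS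
    have hxy : x ≠ y := (G₂.mem_edgeSet.mp heS2).ne
    have hdown : ∀ e' ∈ S', π e' < π s(x,y) := by
      intro e' he'
      obtain ⟨hne', he'S⟩ := Finset.mem_erase.1 he'
      rcases lt_or_eq_of_le (hmax e' he'S) with h | h
      · exact h
      · exact absurd (hπ e' s(x,y) (G₂.not_isDiag_of_mem_edgeSet (hsub he'S))
          (G₂.not_isDiag_of_mem_edgeSet heS2) h) hne'
    have hup₂ : ∀ e' ∈ G₂.edgeSet, π e' < π s(x,y) → e' ∈ S' := by
      intro e' he' hlt
      exact Finset.mem_erase.2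
        ⟨fun h => absurd (h ▸ hlt) (lt_irrefl _), hclosed _ heS e' he' hlt⟩
    have hup₁ : ∀ e' ∈ G₁.edgeSet, π e' < π s(x,y) → e' ∈ S' := fun e' he' =>
      hup₂ e' (by rw [hG₂]; exact Set.mem_insert_of_mem _ he')
    have char₁ := greedy_char G₁ π M₁ hM₁ S' s(x,y) hup₁ hdown
    have char₂ := greedy_char G₂ π M₂ hM₂ S' s(x,y) hup₂ hdown
    have hScoe : (↑S : Set (Sym2 W)) = insert s(x,y) ↑S' := by
      rw [hS'def, ← Finset.coe_insert, Finset.insert_erase heS]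
    have hS'card : S'.card = n := by
      rw [hS'def, Finset.card_erase_of_mem heS, hcard]
      omega
    have hS'closed : ∀ e₁ ∈ S', ∀ e' ∈ G₂.edgeSet, π e' < π e₁ → e' ∈ S' := by
      intro e₁ h1 e' he' hlt
      exact hup₂ e' he' (lt_trans hlt (hdown e₁ h1))
    have hInv := ih S' hS'card (fun e' h => hsub (Finset.erase_subset _ _ h)) hS'closed
    have heA : s(x,y) ∉ M₁ ∩ (↑S' : Set (Sym2 W)) := fun h =>
      Finset.notMem_erase s(x,y) S h.2
    have heB : s(x,y) ∉ M₂ ∩ (↑S' : Set (Sym2 W)) := fun h =>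
      Finset.notMem_erase s(x,y) S h.2
    have hAfin : (M₁ ∩ (↑S' : Set (Sym2 W))).Finite :=
      Set.Finite.inter_of_right S'.finite_toSet M₁
    have hBfin : (M₂ ∩ (↑S' : Set (Sym2 W))).Finite :=
      Set.Finite.inter_of_right S'.finite_toSet M₂
    refine Inv.step hxy hAfin hBfin heA heB hInv ?_ ?_ ?_ ?_
    · intro hnes hx hy
      have hE1 : s(x,y) ∈ G₁.edgeSet := by
        have h2 := heS2
        rw [hG₂] at h2
        rcases h2 with h | h
        · exact absurd h hnes
        · exact h
      have hm : s(x,y) ∈ M₁ := by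
        refine char₁.2 ⟨hE1, ?_⟩
        intro z hz
        rcases Sym2.mem_iff.1 hz with rfl | rfl
        · exact hx
        · exact hy
      rw [hScoe, inter_insert_mem hm]
    · intro h
      have hm : s(x,y) ∉ M₁ := by
        intro hm
        obtain ⟨hE1, hfree⟩ := char₁.1 hm
        rcases h with h | h | h
        · rw [h] at hE1; exact hne hE1
        · exact hfree x (by simp) h
        · exact hfree y (by simp) h
      rw [hScoe, inter_insert_notMem hm]
    · intro hx hy
      have hm : s(x,y) ∈ M₂ := by
        refine char₂.2 ⟨heS2, ?_⟩
        intro z hz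
        rcases Sym2.mem_iff.1 hz with rfl | rfl
        · exact hx
        · exact hy
      rw [hScoe, inter_insert_mem hm]
    · intro h
      have hm : s(x,y) ∉ M₂ := by
        intro hm
        obtain ⟨-, hfree⟩ := char₂.1 hm
        rcases h with h | h
        · exact hfree x (by simp) h
        · exact hfree y (by simp) h
      rw [hScoe, inter_insert_notMem hm]

end GreedySensitivity

/-- If `G₂` is obtained from `G₁` by adding a single edge `e* = s(a,b)`, then for every
injective ranking `π` of the unordered pairs of distinct vertices, the sizes of the greedy
matchings of `G₁` and of `G₂` differ by at most `1`. -/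
theorem greedyMatching_card_diff_le_one {V : Type*} [Fintype V]
    (G₁ G₂ : SimpleGraph V) (a b : V) (hab : a ≠ b)
    (hne : s(a, b) ∉ G₁.edgeSet)
    (hG₂ : G₂.edgeSet = insert s(a, b) G₁.edgeSet)
    (π : Sym2 V → ℝ)
    (hπ : ∀ e₁ e₂ : Sym2 V, ¬e₁.IsDiag → ¬e₂.IsDiag → π e₁ = π e₂ → e₁ = e₂)
    (M₁ M₂ : Set (Sym2 V))
    (hM₁ : IsGreedyMatching G₁ π M₁) (hM₂ : IsGreedyMatching G₂ π M₂) :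
    |(M₁.ncard : ℤ) - (M₂.ncard : ℤ)| ≤ 1 := by
  classical
  have key := GreedySensitivity.main G₁ G₂ a b hne hG₂ π hπ M₁ M₂ hM₁ hM₂
    G₂.edgeFinset.card G₂.edgeFinset rfl (by simp)
    (fun e _ e' he' _ => SimpleGraph.mem_edgeFinset.2 he')
  have h1 : M₁ ∩ (↑G₂.edgeFinset : Set (Sym2 V)) = M₁ := by
    rw [SimpleGraph.coe_edgeFinset]
    refine Set.inter_eq_left.2 fun e he => ?_
    rw [hG₂]
    exact Set.mem_insert_of_mem _ ((hM₁ e).1 he).1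
  have h2 : M₂ ∩ (↑G₂.edgeFinset : Set (Sym2 V)) = M₂ := by
    rw [SimpleGraph.coe_edgeFinset]
    exact Set.inter_eq_left.2 fun e he => ((hM₂ e).1 he).1
  rw [h1, h2] at key
  exact key.card_diff
end

section
/- Let G₁ be a simple graph on a finite vertex set V with |V| = n, let e* be an unordered pair of distinct vertices of V that is not an edge of G₁, and let G₂ be the graph whose edge set is the edge set of G₁ together with e*. Let π be an injective ranking assigning distinct real values to all unordered pairs of distinct vertices of V, and for i = 1, 2 let Sᵢ ⊆ V be the set of vertices matched by the greedy matching M_π(Gᵢ). Then for every positive integer s ≤ n there exists a bijection f : V → V such that for every subset T ⊆ V with |T| = s, | (n/(2s))·|T ∩ S₁| − (n/(2s))·|f(T) ∩ S₂| | ≤ n/s. Consequently, if s ≥ 16·24·(ln n)/ρ² for some ρ > 0, this bound is at most n·ρ²/(16·24·ln n). -/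
lemma helper0 {V : Type*} [Fintype V] (A B X : Set V)
    (h : ((A \ B) ∪ (B \ A)).ncard ≤ 2) :
    (((A ∪ X) \ (B ∪ X)) ∪ ((B ∪ X) \ (A ∪ X))).ncard ≤ 2 := by
  refine le_trans (Set.ncard_le_ncard ?_ (Set.toFinite _)) h
  rintro v (⟨hv1, hv2⟩ | ⟨hv1, hv2⟩)
  · rcases hv1 with hv1 | hv1
    · exact Or.inl ⟨hv1, fun h => hv2 (Or.inl h)⟩
    · exact absurd (Or.inr hv1) hv2
  · rcases hv1 with hv1 | hv1
    · exact Or.inr ⟨hv1, fun h => hv2 (Or.inl h)⟩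
    · exact absurd (Or.inr hv1) hv2

lemma helper1 {V : Type*} [Fintype V] (A B : Set V) (u w u₀ : V)
    (hD : ((A \ B) ∪ (B \ A)).ncard ≤ 2)
    (hu₀B : u₀ ∈ B) (hu₀A : u₀ ∉ A) (hu₀ : u₀ = u ∨ u₀ = w) :
    (((A ∪ {u, w}) \ B) ∪ (B \ (A ∪ {u, w}))).ncard ≤ 2 := by
  have hu₀D : u₀ ∈ (A \ B) ∪ (B \ A) := Or.inr ⟨hu₀B, hu₀A⟩
  have hsub : ((A ∪ {u, w}) \ B) ∪ (B \ (A ∪ {u, w})) ⊆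
      (((A \ B) ∪ (B \ A)) \ {u₀}) ∪ (({u, w} : Set V) \ {u₀}) := by
    rintro v (⟨(hv | hv), hvB⟩ | ⟨hvB, hvA⟩)
    · exact Or.inl ⟨Or.inl ⟨hv, hvB⟩, fun h => hvB (Set.mem_singleton_iff.mp h ▸ hu₀B)⟩
    · exact Or.inr ⟨hv, fun h => hvB (Set.mem_singleton_iff.mp h ▸ hu₀B)⟩
    · refine Or.inl ⟨Or.inr ⟨hvB, fun h => hvA (Or.inl h)⟩, fun h => ?_⟩
      rw [Set.mem_singleton_iff] at h; subst h
      rcases hu₀ with rfl | rfl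
      · exact hvA (Or.inr (by simp))
      · exact hvA (Or.inr (by simp))
  have h1 : (((A \ B) ∪ (B \ A)) \ {u₀}).ncard + 1 = ((A \ B) ∪ (B \ A)).ncard :=
    Set.ncard_diff_singleton_add_one hu₀D (Set.toFinite _)
  have h2 : (({u, w} : Set V) \ {u₀}).ncard ≤ 1 := by
    rcases hu₀ with rfl | rfl
    · refine le_trans (Set.ncard_le_ncard ?_ (Set.toFinite _)) (le_of_eq (Set.ncard_singleton w))
      rintro v ⟨hv1, hv2⟩
      rcases hv1 with rfl | hv1
      · exact absurd rfl hv2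
      · exact hv1
    · refine le_trans (Set.ncard_le_ncard ?_ (Set.toFinite _)) (le_of_eq (Set.ncard_singleton u))
      rintro v ⟨hv1, hv2⟩
      rcases hv1 with rfl | hv1
      · exact Set.mem_singleton _
      · exact absurd hv1 hv2
  calc (((A ∪ {u, w}) \ B) ∪ (B \ (A ∪ {u, w}))).ncard
      ≤ ((((A \ B) ∪ (B \ A)) \ {u₀}) ∪ (({u, w} : Set V) \ {u₀})).ncard :=
        Set.ncard_le_ncard hsub (Set.toFinite _)
    _ ≤ (((A \ B) ∪ (B \ A)) \ {u₀}).ncard + (({u, w} : Set V) \ {u₀}).ncard :=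
        Set.ncard_union_le _ _
    _ ≤ 1 + 1 := by omega
    _ = 2 := rfl

lemma sym2_exists_rep {V : Type*} (e : Sym2 V) : ∃ u w, e = s(u, w) := by
  induction e using Sym2.ind with
  | _ u w => exact ⟨u, w, rfl⟩

/-- Coupled global sensitivity of the sublinear-time maximum matching estimator:
if `G₂` is `G₁` plus one edge `e* = s(a,b)` and `S₁, S₂` are the matched vertex sets of
the greedy matchings with respect to an injective ranking `π`, then for every sample
size `1 ≤ s ≤ n` there is a bijection `f` of the vertices such that for every sample
`T` of `s` vertices the matching-size estimators `(n/(2s))·|T ∩ S₁|` and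
`(n/(2s))·|f(T) ∩ S₂|` differ by at most `n/s`; moreover if
`s ≥ 16·24·(ln n)/ρ²` then `n/s ≤ n·ρ²/(16·24·ln n)`. -/
theorem matching_estimator_coupled_sensitivity {V : Type*} [Fintype V] [DecidableEq V]
    (n : ℕ) (hn : Fintype.card V = n)
    (G₁ G₂ : SimpleGraph V) (a b : V) (hab : a ≠ b)
    (hne : s(a, b) ∉ G₁.edgeSet)
    (hG₂ : G₂.edgeSet = insert s(a, b) G₁.edgeSet)
    (π : Sym2 V → ℝ)
    (hπ : ∀ e₁ e₂ : Sym2 V, ¬e₁.IsDiag → ¬e₂.IsDiag → π e₁ = π e₂ → e₁ = e₂)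
    (M₁ M₂ : Set (Sym2 V))
    (hM₁ : IsGreedyMatching G₁ π M₁) (hM₂ : IsGreedyMatching G₂ π M₂)
    (S₁ S₂ : Finset V)
    (hS₁ : ∀ v : V, v ∈ S₁ ↔ ∃ e ∈ M₁, v ∈ e)
    (hS₂ : ∀ v : V, v ∈ S₂ ↔ ∃ e ∈ M₂, v ∈ e)
    (s : ℕ) (hs : 1 ≤ s) (hsn : s ≤ n) :
    ∃ f : V ≃ V,
      (∀ T : Finset V, T.card = s →
        |((n : ℝ) / (2 * s)) * ((T ∩ S₁).card : ℝ) -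
            ((n : ℝ) / (2 * s)) * ((T.image f ∩ S₂).card : ℝ)| ≤ (n : ℝ) / s) ∧
      ∀ ρ : ℝ, 0 < ρ → 16 * 24 * Real.log n / ρ ^ 2 ≤ (s : ℝ) →
        (n : ℝ) / s ≤ (n : ℝ) * ρ ^ 2 / (16 * 24 * Real.log n) := by
  have hsub1 : M₁ ⊆ G₁.edgeSet := fun e he => ((hM₁ e).mp he).1
  have hsub2 : M₂ ⊆ G₂.edgeSet := fun e he => ((hM₂ e).mp he).1
  have hG12 : G₁.edgeSet ⊆ G₂.edgeSet := by rw [hG₂]; exact Set.subset_insert _ _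
  have hinj : ∀ e₁ ∈ G₂.edgeSet, ∀ e₂ ∈ G₂.edgeSet, π e₁ = π e₂ → e₁ = e₂ := fun e₁ h₁ e₂ h₂ h =>
    hπ e₁ e₂ (G₂.not_isDiag_of_mem_edgeSet h₁) (G₂.not_isDiag_of_mem_edgeSet h₂) h
  -- blocking lemmas
  have blocked₁ : ∀ e ∈ G₁.edgeSet, e ∉ M₁ → ∃ e' ∈ M₁, π e' < π e ∧ ∃ v, v ∈ e ∧ v ∈ e' := by
    intro e heG heM
    by_contra hc; push_neg at hc
    refine heM ((hM₁ e).mpr ⟨heG, fun e' he'G hsh hlt he'M => ?_⟩)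
    obtain ⟨v, hv⟩ := hsh
    exact (hc e' he'M hlt v hv.1) hv.2
  have blocked₂ : ∀ e ∈ G₂.edgeSet, e ∉ M₂ → ∃ e' ∈ M₂, π e' < π e ∧ ∃ v, v ∈ e ∧ v ∈ e' := by
    intro e heG heM
    by_contra hc; push_neg at hc
    refine heM ((hM₂ e).mpr ⟨heG, fun e' he'G hsh hlt he'M => ?_⟩)
    obtain ⟨v, hv⟩ := hsh
    exact (hc e' he'M hlt v hv.1) hv.2
  -- agreement below the new edge
  have agree : ∀ N : ℕ, ∀ e : Sym2 V, {d : Sym2 V | d ∈ G₂.edgeSet ∧ π d < π e}.ncard ≤ N →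
      π e < π s(a, b) → (e ∈ M₁ ↔ e ∈ M₂) := by
    intro N
    induction N with
    | zero =>
      intro e hc hlt
      have hempty : {d : Sym2 V | d ∈ G₂.edgeSet ∧ π d < π e} = ∅ :=
        Set.ncard_eq_zero (Set.toFinite _) |>.mp (Nat.le_zero.mp hc)
      have hnolt : ∀ d ∈ G₂.edgeSet, ¬ π d < π e := by
        intro d hd hlt'
        have : d ∈ ({} : Set (Sym2 V)) := hempty ▸ (⟨hd, hlt'⟩ : d ∈ {d | d ∈ G₂.edgeSet ∧ π d < π e})
        exact this
      have heG : e ∈ G₁.edgeSet ↔ e ∈ G₂.edgeSet := by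
        rw [hG₂]
        constructor
        · exact fun h => Set.mem_insert_of_mem _ h
        · rintro (h | h)
          · exact absurd (h ▸ rfl : π e = π s(a,b)) (ne_of_lt hlt)
          · exact h
      constructor
      · intro he
        exact (hM₂ e).mpr ⟨heG.mp ((hM₁ e).mp he).1,
          fun e' he' _ hlt' _ => absurd hlt' (hnolt e' he')⟩
      · intro he
        exact (hM₁ e).mpr ⟨heG.mpr ((hM₂ e).mp he).1,
          fun e' he' _ hlt' _ => absurd hlt' (hnolt e' (hG12 he'))⟩
    | succ N IH =>
      intro e hc hlt
      have hmeas : ∀ d ∈ G₂.edgeSet, π d < π e →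
          {d' : Sym2 V | d' ∈ G₂.edgeSet ∧ π d' < π d}.ncard ≤ N := by
        intro d hd hltd
        have hdS : d ∈ {d' : Sym2 V | d' ∈ G₂.edgeSet ∧ π d' < π e} := ⟨hd, hltd⟩
        have h1 : ({d' : Sym2 V | d' ∈ G₂.edgeSet ∧ π d' < π e} \ {d}).ncard + 1 =
            {d' : Sym2 V | d' ∈ G₂.edgeSet ∧ π d' < π e}.ncard :=
          Set.ncard_diff_singleton_add_one hdS (Set.toFinite _)
        have h2 : {d' : Sym2 V | d' ∈ G₂.edgeSet ∧ π d' < π d} ⊆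
            {d' : Sym2 V | d' ∈ G₂.edgeSet ∧ π d' < π e} \ {d} := by
          rintro d' ⟨hd', hlt'⟩
          exact ⟨⟨hd', hlt'.trans hltd⟩, fun h => absurd (Set.mem_singleton_iff.mp h ▸ hlt') (lt_irrefl _)⟩
        have := Set.ncard_le_ncard h2 (Set.toFinite _)
        omega
      have heG : e ∈ G₁.edgeSet ↔ e ∈ G₂.edgeSet := by
        rw [hG₂]
        constructor
        · exact fun h => Set.mem_insert_of_mem _ h
        · rintro (h | h)
          · exact absurd (h ▸ rfl : π e = π s(a,b)) (ne_of_lt hlt)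
          · exact h
      constructor
      · intro he
        refine (hM₂ e).mpr ⟨heG.mp ((hM₁ e).mp he).1, fun e' he' hsh hlt' he'M => ?_⟩
        have he'G₁ : e' ∈ G₁.edgeSet := by
          rw [hG₂] at he'
          rcases he' with h | h
          · exact absurd (h ▸ rfl : π e' = π s(a,b)) (ne_of_lt (hlt'.trans hlt))
          · exact h
        have he'M₁ : e' ∉ M₁ := ((hM₁ e).mp he).2 e' he'G₁ hsh hlt'
        exact he'M₁ ((IH e' (hmeas e' he' hlt') (hlt'.trans hlt)).mpr he'M)
      · intro he
        refine (hM₁ e).mpr ⟨heG.mpr ((hM₂ e).mp he).1, fun e' he' hsh hlt' he'M => ?_⟩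
        have he'M₂ : e' ∉ M₂ := ((hM₂ e).mp he).2 e' (hG12 he') hsh hlt'
        exact he'M₂ ((IH e' (hmeas e' (hG12 he') hlt') (hlt'.trans hlt)).mp he'M)

  have inv : ∀ N : ℕ, ∀ r : ℝ, ({e : Sym2 V | (e ∈ M₁ ∨ e ∈ M₂) ∧ π e < r}).ncard ≤ N →
      (({v : V | ∃ e ∈ M₁, π e < r ∧ v ∈ e} \ {v : V | ∃ e ∈ M₂, π e < r ∧ v ∈ e}) ∪
        ({v : V | ∃ e ∈ M₂, π e < r ∧ v ∈ e} \ {v : V | ∃ e ∈ M₁, π e < r ∧ v ∈ e})).ncard ≤ 2 := by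
    have hEmpty : ∀ r : ℝ, {e : Sym2 V | (e ∈ M₁ ∨ e ∈ M₂) ∧ π e < r} = ∅ →
        (({v : V | ∃ e ∈ M₁, π e < r ∧ v ∈ e} \ {v : V | ∃ e ∈ M₂, π e < r ∧ v ∈ e}) ∪
          ({v : V | ∃ e ∈ M₂, π e < r ∧ v ∈ e} \ {v : V | ∃ e ∈ M₁, π e < r ∧ v ∈ e})).ncard ≤ 2 := by
      intro r hr
      have h1 : {v : V | ∃ e ∈ M₁, π e < r ∧ v ∈ e} = ∅ := by
        ext v; simp only [Set.mem_setOf_eq, Set.mem_empty_iff_false, iff_false]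
        rintro ⟨e, he, hlt, -⟩
        have hmem : e ∈ {e : Sym2 V | (e ∈ M₁ ∨ e ∈ M₂) ∧ π e < r} := ⟨Or.inl he, hlt⟩
        rw [hr] at hmem
        exact hmem
      have h2 : {v : V | ∃ e ∈ M₂, π e < r ∧ v ∈ e} = ∅ := by
        ext v; simp only [Set.mem_setOf_eq, Set.mem_empty_iff_false, iff_false]
        rintro ⟨e, he, hlt, -⟩
        have hmem : e ∈ {e : Sym2 V | (e ∈ M₁ ∨ e ∈ M₂) ∧ π e < r} := ⟨Or.inr he, hlt⟩
        rw [hr] at hmem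
        exact hmem
      rw [h1, h2]
      simp
    intro N
    induction N with
    | zero =>
      intro r hc
      exact hEmpty r (Set.ncard_eq_zero (Set.toFinite _) |>.mp (Nat.le_zero.mp hc))
    | succ N IH =>
      intro r hc
      by_cases hS : {e : Sym2 V | (e ∈ M₁ ∨ e ∈ M₂) ∧ π e < r}.Nonempty
      swap
      · exact hEmpty r (Set.not_nonempty_iff_eq_empty.mp hS)
      obtain ⟨e, heS, hmax⟩ := Set.Finite.exists_maximalFor π _ (Set.toFinite _) hS
      have heG₂ : e ∈ G₂.edgeSet := by
        rcases heS.1 with h | h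
        · exact hG12 (hsub1 h)
        · exact hsub2 h
      obtain ⟨u, w, rfl⟩ := sym2_exists_rep e
      have heltr : π s(u, w) < r := heS.2
      -- the set of strictly smaller relevant edges
      have hSsub : {e' : Sym2 V | (e' ∈ M₁ ∨ e' ∈ M₂) ∧ π e' < π s(u, w)} =
          {e' : Sym2 V | (e' ∈ M₁ ∨ e' ∈ M₂) ∧ π e' < r} \ {s(u, w)} := by
        ext e'
        constructor
        · rintro ⟨hm, hlt⟩
          exact ⟨⟨hm, hlt.trans heltr⟩, fun h =>
            absurd (Set.mem_singleton_iff.mp h ▸ hlt) (lt_irrefl _)⟩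
        · rintro ⟨⟨hm, hlt⟩, hne'⟩
          refine ⟨hm, ?_⟩
          have he'G₂ : e' ∈ G₂.edgeSet := by
            rcases hm with h | h
            · exact hG12 (hsub1 h)
            · exact hsub2 h
          rcases lt_or_ge (π e') (π s(u, w)) with h | h
          · exact h
          · exact absurd (hinj _ heG₂ _ he'G₂ (le_antisymm h (hmax ⟨hm, hlt⟩ h))).symm
              (by simpa [Set.mem_singleton_iff] using hne')
      have hNcard : ({e' : Sym2 V | (e' ∈ M₁ ∨ e' ∈ M₂) ∧ π e' < π s(u, w)}).ncard ≤ N := by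
        rw [hSsub]
        have h1 := Set.ncard_diff_singleton_add_one heS (Set.toFinite _)
        omega
      have hD := IH (π s(u, w)) hNcard
      -- cover expansions
      have hcov₁ : {v : V | ∃ d ∈ M₁, π d < r ∧ v ∈ d} =
          {v : V | ∃ d ∈ M₁, π d < π s(u, w) ∧ v ∈ d} ∪ {v : V | s(u, w) ∈ M₁ ∧ v ∈ s(u, w)} := by
        ext v
        simp only [Set.mem_setOf_eq, Set.mem_union]
        constructor
        · rintro ⟨d, hd, hlt, hv⟩
          by_cases hde : d = s(u, w)
          · exact Or.inr ⟨hde ▸ hd, hde ▸ hv⟩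
          · have : d ∈ {e' : Sym2 V | (e' ∈ M₁ ∨ e' ∈ M₂) ∧ π e' < r} \ {s(u, w)} :=
              ⟨⟨Or.inl hd, hlt⟩, by simpa [Set.mem_singleton_iff] using hde⟩
            rw [← hSsub] at this
            exact Or.inl ⟨d, hd, this.2, hv⟩
        · rintro (⟨d, hd, hlt, hv⟩ | ⟨hd, hv⟩)
          · exact ⟨d, hd, hlt.trans heltr, hv⟩
          · exact ⟨s(u, w), hd, heltr, hv⟩
      have hcov₂ : {v : V | ∃ d ∈ M₂, π d < r ∧ v ∈ d} =
          {v : V | ∃ d ∈ M₂, π d < π s(u, w) ∧ v ∈ d} ∪ {v : V | s(u, w) ∈ M₂ ∧ v ∈ s(u, w)} := by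
        ext v
        simp only [Set.mem_setOf_eq, Set.mem_union]
        constructor
        · rintro ⟨d, hd, hlt, hv⟩
          by_cases hde : d = s(u, w)
          · exact Or.inr ⟨hde ▸ hd, hde ▸ hv⟩
          · have : d ∈ {e' : Sym2 V | (e' ∈ M₁ ∨ e' ∈ M₂) ∧ π e' < r} \ {s(u, w)} :=
              ⟨⟨Or.inr hd, hlt⟩, by simpa [Set.mem_singleton_iff] using hde⟩
            rw [← hSsub] at this
            exact Or.inl ⟨d, hd, this.2, hv⟩
        · rintro (⟨d, hd, hlt, hv⟩ | ⟨hd, hv⟩)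
          · exact ⟨d, hd, hlt.trans heltr, hv⟩
          · exact ⟨s(u, w), hd, heltr, hv⟩
      rw [hcov₁, hcov₂]
      by_cases h1 : s(u, w) ∈ M₁ <;> by_cases h2 : s(u, w) ∈ M₂
      · -- in both matchings
        have hX : {v : V | s(u, w) ∈ M₁ ∧ v ∈ s(u, w)} = {v : V | s(u, w) ∈ M₂ ∧ v ∈ s(u, w)} := by
          ext v; simp [h1, h2]
        rw [hX]
        exact helper0 _ _ _ hD
      · -- in M₁ only
        have hX1 : {v : V | s(u, w) ∈ M₁ ∧ v ∈ s(u, w)} = ({u, w} : Set V) := by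
          ext v; simp [h1, Sym2.mem_iff]
        have hX2 : {v : V | s(u, w) ∈ M₂ ∧ v ∈ s(u, w)} = (∅ : Set V) := by
          ext v; simp [h2]
        rw [hX1, hX2, Set.union_empty]
        obtain ⟨e', he'M₂, hlt', v₀, hv₀e, hv₀e'⟩ := blocked₂ s(u, w) heG₂ h2
        have hv₀B : v₀ ∈ {v : V | ∃ d ∈ M₂, π d < π s(u, w) ∧ v ∈ d} := ⟨e', he'M₂, hlt', hv₀e'⟩
        have hv₀A : v₀ ∉ {v : V | ∃ d ∈ M₁, π d < π s(u, w) ∧ v ∈ d} := by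
          rintro ⟨d, hd, hlt, hv⟩
          exact ((hM₁ s(u, w)).mp h1).2 d (hsub1 hd) ⟨v₀, hv₀e, hv⟩ hlt hd
        exact helper1 _ _ u w v₀ hD hv₀B hv₀A (Sym2.mem_iff.mp hv₀e)
      · -- in M₂ only
        have hX1 : {v : V | s(u, w) ∈ M₁ ∧ v ∈ s(u, w)} = (∅ : Set V) := by
          ext v; simp [h1]
        have hX2 : {v : V | s(u, w) ∈ M₂ ∧ v ∈ s(u, w)} = ({u, w} : Set V) := by
          ext v; simp [h2, Sym2.mem_iff]
        rw [hX1, hX2, Set.union_empty]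
        by_cases heG₁ : s(u, w) ∈ G₁.edgeSet
        · obtain ⟨e', he'M₁, hlt', v₀, hv₀e, hv₀e'⟩ := blocked₁ s(u, w) heG₁ h1
          have hv₀A : v₀ ∈ {v : V | ∃ d ∈ M₁, π d < π s(u, w) ∧ v ∈ d} := ⟨e', he'M₁, hlt', hv₀e'⟩
          have hv₀B : v₀ ∉ {v : V | ∃ d ∈ M₂, π d < π s(u, w) ∧ v ∈ d} := by
            rintro ⟨d, hd, hlt, hv⟩
            exact ((hM₂ s(u, w)).mp h2).2 d (hsub2 hd) ⟨v₀, hv₀e, hv⟩ hlt hd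
          rw [Set.union_comm] at hD ⊢
          exact helper1 _ _ u w v₀ hD hv₀A hv₀B (Sym2.mem_iff.mp hv₀e)
        · -- the new edge
          have heab : s(u, w) = s(a, b) := by
            rw [hG₂] at heG₂
            rcases heG₂ with h | h
            · exact h
            · exact absurd h heG₁
          have hAB : {v : V | ∃ d ∈ M₁, π d < π s(u, w) ∧ v ∈ d} =
              {v : V | ∃ d ∈ M₂, π d < π s(u, w) ∧ v ∈ d} := by
            ext v
            simp only [Set.mem_setOf_eq]
            constructor
            · rintro ⟨d, hd, hlt, hv⟩
              exact ⟨d, (agree _ d le_rfl (heab ▸ hlt)).mp hd, hlt, hv⟩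
            · rintro ⟨d, hd, hlt, hv⟩
              exact ⟨d, (agree _ d le_rfl (heab ▸ hlt)).mpr hd, hlt, hv⟩
          rw [hAB]
          have hsub' : ({v : V | ∃ d ∈ M₂, π d < π s(u, w) ∧ v ∈ d} \
              ({v : V | ∃ d ∈ M₂, π d < π s(u, w) ∧ v ∈ d} ∪ {u, w})) ∪
              (({v : V | ∃ d ∈ M₂, π d < π s(u, w) ∧ v ∈ d} ∪ {u, w}) \
              {v : V | ∃ d ∈ M₂, π d < π s(u, w) ∧ v ∈ d}) ⊆ ({u, w} : Set V) := by
            rintro v (⟨hv1, hv2⟩ | ⟨hv1, hv2⟩)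
            · exact absurd (Or.inl hv1) hv2
            · rcases hv1 with h | h
              · exact absurd h hv2
              · exact h
          refine le_trans (Set.ncard_le_ncard hsub' (Set.toFinite _)) ?_
          refine le_trans (Set.ncard_insert_le _ _) ?_
          simp [Set.ncard_singleton]
      · -- in neither
        have hX1 : {v : V | s(u, w) ∈ M₁ ∧ v ∈ s(u, w)} = (∅ : Set V) := by
          ext v; simp [h1]
        have hX2 : {v : V | s(u, w) ∈ M₂ ∧ v ∈ s(u, w)} = (∅ : Set V) := by
          ext v; simp [h2]
        rw [hX1, hX2, Set.union_empty, Set.union_empty]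
        exact hD
  have hne' : Nonempty (Sym2 V) := ⟨s(a, b)⟩
  obtain ⟨R0, hR0⟩ := Finite.exists_le π
  have hR : ∀ e : Sym2 V, π e < R0 + 1 := fun e => lt_of_le_of_lt (hR0 e) (lt_add_one R0)
  have hcovS₁ : {v : V | ∃ e ∈ M₁, π e < R0 + 1 ∧ v ∈ e} = (↑S₁ : Set V) := by
    ext v
    simp only [Set.mem_setOf_eq, Finset.coe_sort_coe, Finset.mem_coe]
    rw [hS₁ v]
    constructor
    · rintro ⟨e, he, -, hv⟩; exact ⟨e, he, hv⟩
    · rintro ⟨e, he, hv⟩; exact ⟨e, he, hR e, hv⟩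
  have hcovS₂ : {v : V | ∃ e ∈ M₂, π e < R0 + 1 ∧ v ∈ e} = (↑S₂ : Set V) := by
    ext v
    simp only [Set.mem_setOf_eq, Finset.coe_sort_coe, Finset.mem_coe]
    rw [hS₂ v]
    constructor
    · rintro ⟨e, he, -, hv⟩; exact ⟨e, he, hv⟩
    · rintro ⟨e, he, hv⟩; exact ⟨e, he, hR e, hv⟩
  have hkey := inv ({e : Sym2 V | (e ∈ M₁ ∨ e ∈ M₂) ∧ π e < R0 + 1}).ncard (R0 + 1) le_rfl
  rw [hcovS₁, hcovS₂] at hkey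
  rw [← Finset.coe_sdiff, ← Finset.coe_sdiff, ← Finset.coe_union,
    Set.ncard_coe_finset] at hkey
  have h12 : (S₁ \ S₂).card ≤ 2 :=
    le_trans (Finset.card_le_card Finset.subset_union_left) hkey
  have h21 : (S₂ \ S₁).card ≤ 2 :=
    le_trans (Finset.card_le_card Finset.subset_union_right) hkey
  have hs0 : (0 : ℝ) < (s : ℝ) := by exact_mod_cast hs
  refine ⟨Equiv.refl V, ?_, ?_⟩
  · intro T hT
    have himg : T.image (Equiv.refl V) = T := by simp
    rw [himg]
    have hx : (T ∩ S₁).card ≤ (T ∩ S₂).card + 2 := by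
      have hsub' : T ∩ S₁ ⊆ (T ∩ S₂) ∪ (S₁ \ S₂) := by
        intro v hv
        simp only [Finset.mem_inter, Finset.mem_union, Finset.mem_sdiff] at *
        by_cases hvS₂ : v ∈ S₂
        · exact Or.inl ⟨hv.1, hvS₂⟩
        · exact Or.inr ⟨hv.2, hvS₂⟩
      calc (T ∩ S₁).card ≤ ((T ∩ S₂) ∪ (S₁ \ S₂)).card := Finset.card_le_card hsub'
        _ ≤ (T ∩ S₂).card + (S₁ \ S₂).card := Finset.card_union_le _ _
        _ ≤ (T ∩ S₂).card + 2 := by omega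
    have hy : (T ∩ S₂).card ≤ (T ∩ S₁).card + 2 := by
      have hsub' : T ∩ S₂ ⊆ (T ∩ S₁) ∪ (S₂ \ S₁) := by
        intro v hv
        simp only [Finset.mem_inter, Finset.mem_union, Finset.mem_sdiff] at *
        by_cases hvS₁ : v ∈ S₁
        · exact Or.inl ⟨hv.1, hvS₁⟩
        · exact Or.inr ⟨hv.2, hvS₁⟩
      calc (T ∩ S₂).card ≤ ((T ∩ S₁) ∪ (S₂ \ S₁)).card := Finset.card_le_card hsub'
        _ ≤ (T ∩ S₁).card + (S₂ \ S₁).card := Finset.card_union_le _ _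
        _ ≤ (T ∩ S₁).card + 2 := by omega
    have habs : |((T ∩ S₁).card : ℝ) - ((T ∩ S₂).card : ℝ)| ≤ 2 := by
      rw [abs_le]
      have hx' : ((T ∩ S₁).card : ℝ) ≤ ((T ∩ S₂).card : ℝ) + 2 := by exact_mod_cast hx
      have hy' : ((T ∩ S₂).card : ℝ) ≤ ((T ∩ S₁).card : ℝ) + 2 := by exact_mod_cast hy
      constructor <;> linarith
    rw [← mul_sub, abs_mul, abs_of_nonneg (by positivity : (0:ℝ) ≤ (n : ℝ) / (2 * s))]
    calc (n : ℝ) / (2 * s) * |((T ∩ S₁).card : ℝ) - ((T ∩ S₂).card : ℝ)|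
        ≤ (n : ℝ) / (2 * s) * 2 := mul_le_mul_of_nonneg_left habs (by positivity)
      _ = (n : ℝ) / s := by field_simp
  · intro ρ hρ hs'
    have hnt : Nontrivial V := ⟨a, b, hab⟩
    have h2n : 1 < n := hn ▸ Fintype.one_lt_card
    have hlog : 0 < Real.log n := Real.log_pos (by exact_mod_cast h2n)
    have hC : (0 : ℝ) < 16 * 24 * Real.log n := by positivity
    have hb : (0 : ℝ) < 16 * 24 * Real.log n / ρ ^ 2 := by positivity
    calc (n : ℝ) / s ≤ (n : ℝ) / (16 * 24 * Real.log n / ρ ^ 2) :=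
          div_le_div_of_nonneg_left (by positivity) hb hs'
      _ = (n : ℝ) * ρ ^ 2 / (16 * 24 * Real.log n) := div_div_eq_mul_div _ _ _
end
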